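/- Let q = u² be a square prime power, φ a nondegenerate bilinear form and ψ a nondegenerate hermitian form (for the involution x ↦ x^u) on 𝔽_q^N, and suppose G ⊆ O(φ) ∩ U(ψ) ⊆ GL_N(𝔽_q) acts absolutely irreducibly on 𝔽_q^N. Then there exists x ∈ GL_N(𝔽_q) and a nondegenerate bilinear form φ' on 𝔽_u^N such that xGx⁻¹ ⊆ Isom(φ') ⊆ GL_N(𝔽_u); moreover φ' is symmetric iff φ is symmetric, and skew-symmetric iff φ is skew-symmetric. -/

import Mathlib

set_option linter.unusedSectionVars false
set_option maxHeartbeats 1000000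

open Matrix

open Matrix

section Aux

variable {F : Type*} [Field F] [Fintype F]

lemma aux_exists_sigma (u : ℕ) (hq : Fintype.card F = u ^ 2) :
    ∃ σ : F →+* F, ∀ x, σ x = x ^ u := by
  haveI := ringChar.charP F
  obtain ⟨n, hp, hcard⟩ := FiniteField.card F (ringChar F)
  have hdvd : u ∣ ringChar F ^ (n : ℕ) := ⟨u, by rw [← hcard, hq, sq]⟩
  obtain ⟨m, -, rfl⟩ := (Nat.dvd_prime_pow hp).1 hdvd
  haveI : ExpChar F (ringChar F) := ExpChar.prime hp
  exact ⟨iterateFrobenius F (ringChar F) m, fun x => iterateFrobenius_def ..⟩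

lemma aux_norm_surj (u : ℕ) (hu : 2 ≤ u) (hq : Fintype.card F = u ^ 2)
    (lam : F) (hl0 : lam ≠ 0) (hlu : lam ^ u = lam) :
    ∃ mu : F, mu ≠ 0 ∧ mu ^ u * mu = lam := by
  classical
  obtain ⟨g, hg⟩ := IsCyclic.exists_monoid_generator (α := Fˣ)
  have hord : orderOf g = u ^ 2 - 1 := by
    rw [orderOf_eq_card_of_forall_mem_zpowers (fun x => mem_powers_iff_mem_zpowers.1 (hg x)),
      Nat.card_eq_fintype_card, Fintype.card_units, hq]
  set l : Fˣ := Units.mk0 lam hl0 with hldef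
  obtain ⟨k, hk0⟩ := hg l
  have hk : g ^ k = l := hk0
  have hl1 : l ^ (u - 1) = 1 := by
    have h2 : l ^ (u - 1) * l = 1 * l := by
      rw [one_mul, ← pow_succ]
      have : u - 1 + 1 = u := by omega
      rw [this]
      ext
      simp [hldef, hlu]
    exact mul_right_cancel h2
  have hdvd : orderOf g ∣ k * (u - 1) := by
    apply orderOf_dvd_of_pow_eq_one
    rw [pow_mul, hk, hl1]
  have hfac : u ^ 2 - 1 = (u + 1) * (u - 1) := by
    obtain ⟨w, rfl⟩ : ∃ w, u = w + 2 := ⟨u - 2, by omega⟩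
    have h1 : (w + 2) ^ 2 = w * w + 4 * w + 4 := by ring
    have h2 : (w + 2 + 1) * (w + 2 - 1) = w * w + 4 * w + 3 := by
      simp only [show w + 2 + 1 = w + 3 from rfl, show w + 2 - 1 = w + 1 from rfl]
      ring
    omega
  rw [hord, hfac] at hdvd
  have hdvd2 : u + 1 ∣ k := by
    have := (Nat.mul_dvd_mul_iff_right (show 0 < u - 1 by omega)).1 hdvd
    exact this
  obtain ⟨m, hm⟩ := hdvd2
  refine ⟨(g ^ m : Fˣ), Units.ne_zero _, ?_⟩
  have : (g ^ m) ^ (u + 1) = l := by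
    rw [← pow_mul, mul_comm m (u + 1), ← hm, hk]
  calc ((g ^ m : Fˣ) : F) ^ u * ((g ^ m : Fˣ) : F)
      = ((g ^ m : Fˣ) : F) ^ (u + 1) := by rw [pow_succ]
    _ = (((g ^ m) ^ (u + 1) : Fˣ) : F) := by simp
    _ = lam := by rw [this]; rfl

lemma aux_scalar {N : ℕ} (G : Subgroup (GL (Fin N) F))
    (hirr : Submodule.span F {m : Matrix (Fin N) (Fin N) F |
      ∃ g ∈ G, m = (g : Matrix (Fin N) (Fin N) F)} = ⊤)
    (X : Matrix (Fin N) (Fin N) F)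
    (hX : ∀ g ∈ G, X * (g : Matrix (Fin N) (Fin N) F) = (g : Matrix (Fin N) (Fin N) F) * X) :
    ∃ c : F, X = c • (1 : Matrix (Fin N) (Fin N) F) := by
  have hall : ∀ m : Matrix (Fin N) (Fin N) F, X * m = m * X := by
    intro m
    have hm : m ∈ Submodule.span F {m : Matrix (Fin N) (Fin N) F |
        ∃ g ∈ G, m = (g : Matrix (Fin N) (Fin N) F)} := by rw [hirr]; trivial
    induction hm using Submodule.span_induction with
    | mem x hx => obtain ⟨g, hg, rfl⟩ := hx; exact hX g hg
    | zero => simp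
    | add x y _ _ hx hy => rw [mul_add, add_mul, hx, hy]
    | smul a x _ hx => rw [mul_smul_comm, smul_mul_assoc, hx]
  obtain ⟨c, hc⟩ := mem_range_scalar_of_commute_single
    (M := X) (fun i j _ => (hall _).symm)
  exact ⟨c, by rw [← hc]; rw [Matrix.scalar_apply, Matrix.smul_one_eq_diagonal]⟩

lemma aux_descent {N : ℕ} (σ : F →+* F) (hσσ : ∀ x : F, σ (σ x) = x)
    (α : F) (hα : σ α ≠ α)
    (C : Matrix (Fin N) (Fin N) F)
    (h1 : C * C.map σ = 1) :
    ∃ y : Matrix (Fin N) (Fin N) F, IsUnit y ∧ C * (y.map σ) = y := by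
  classical
  set V : Set (Fin N → F) := {v | C.mulVec (σ ∘ v) = v} with hV
  have hCC : ∀ v : Fin N → F, C.mulVec (σ ∘ C.mulVec (σ ∘ v)) = v := by
    intro v
    have : (σ ∘ C.mulVec (σ ∘ v)) = (C.map σ).mulVec (σ ∘ σ ∘ v) := by
      funext i; exact RingHom.map_mulVec σ C (σ ∘ v) i
    rw [this]
    have : (σ ∘ σ ∘ v) = v := by funext i; exact hσσ (v i)
    rw [this, Matrix.mulVec_mulVec, h1, Matrix.one_mulVec]
  have hmem : ∀ (v : Fin N → F) (a : F),
      (a • v + σ a • C.mulVec (σ ∘ v)) ∈ V := by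
    intro v a
    show C.mulVec (σ ∘ (a • v + σ a • C.mulVec (σ ∘ v))) = _
    have hw : (σ ∘ (a • v + σ a • C.mulVec (σ ∘ v)))
        = σ a • (σ ∘ v) + a • (σ ∘ C.mulVec (σ ∘ v)) := by
      funext i
      simp only [Function.comp_apply, Pi.add_apply, Pi.smul_apply, smul_eq_mul]
      rw [_root_.map_add, _root_.map_mul, _root_.map_mul, hσσ]
    rw [hw, Matrix.mulVec_add, Matrix.mulVec_smul, Matrix.mulVec_smul, hCC]
    abel
  have hspan : Submodule.span F V = ⊤ := by
    rw [Submodule.eq_top_iff']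
    intro v
    have hw1 := hmem v 1
    have hw2 := hmem v α
    simp only [one_smul, _root_.map_one] at hw1
    have key : v = (σ α - α)⁻¹ •
        (σ α • (v + C.mulVec (σ ∘ v)) - (α • v + σ α • C.mulVec (σ ∘ v))) := by
      rw [smul_add, add_sub_add_right_eq_sub, ← sub_smul, smul_smul,
        inv_mul_cancel₀ (sub_ne_zero.2 hα), one_smul]
    rw [key]
    exact Submodule.smul_mem _ _ (Submodule.sub_mem _
      (Submodule.smul_mem _ _ (Submodule.subset_span hw1))
      (Submodule.subset_span hw2))
  obtain ⟨s, hsV, hspan', hli⟩ := exists_linearIndependent F V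
  rw [hspan] at hspan'
  let b₀ : Module.Basis s F (Fin N → F) := Module.Basis.mk hli
    (by rw [Subtype.range_coe, hspan'])
  let e : s ≃ Fin N := b₀.indexEquiv (Pi.basisFun F (Fin N))
  let b : Module.Basis (Fin N) F (Fin N → F) := b₀.reindex e
  have hbV : ∀ j, (b j) ∈ V := by
    intro j
    have : b j = ((e.symm j : s) : Fin N → F) := by
      simp [b, b₀, Module.Basis.reindex_apply, Module.Basis.coe_mk]
    rw [this]
    exact hsV (e.symm j).2
  set y : Matrix (Fin N) (Fin N) F := (Pi.basisFun F (Fin N)).toMatrix ⇑b with hy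
  have hyapp : ∀ i j, y i j = b j i := by
    intro i j
    simp [hy, Module.Basis.toMatrix_apply]
  haveI := (Pi.basisFun F (Fin N)).invertibleToMatrix b
  refine ⟨y, isUnit_of_invertible y, ?_⟩
  ext i j
  have hfix := congrFun (hbV j) i
  calc (C * y.map σ) i j = ∑ k, C i k * σ (b j k) := by
        simp [Matrix.mul_apply, Matrix.map_apply, hyapp]
    _ = C.mulVec (σ ∘ b j) i := by simp [Matrix.mulVec, dotProduct]
    _ = b j i := hfix
    _ = y i j := (hyapp i j).symm

end Aux


section Aux2

/-- transpose of a matrix unit, as a unit -/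
noncomputable def tunit {n : Type*} [Fintype n] [DecidableEq n] {R : Type*} [CommRing R]
    (a : (Matrix n n R)ˣ) : (Matrix n n R)ˣ :=
  ⟨a.valᵀ, a.invᵀ, by rw [← transpose_mul, a.inv_val, transpose_one],
    by rw [← transpose_mul, a.val_inv, transpose_one]⟩

lemma tunit_val {n : Type*} [Fintype n] [DecidableEq n] {R : Type*} [CommRing R]
    (a : (Matrix n n R)ˣ) : (tunit a).val = a.valᵀ := rfl

lemma tunit_mul {n : Type*} [Fintype n] [DecidableEq n] {R : Type*} [CommRing R]
    (a b : (Matrix n n R)ˣ) : tunit (a * b) = tunit b * tunit a :=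
  Units.ext (by simp [tunit_val, Units.val_mul, transpose_mul])

lemma tunit_inv {n : Type*} [Fintype n] [DecidableEq n] {R : Type*} [CommRing R]
    (a : (Matrix n n R)ˣ) : tunit a⁻¹ = (tunit a)⁻¹ := by
  apply Units.ext
  calc (tunit a⁻¹).val = (a⁻¹.val)ᵀ := rfl
    _ = (a.inv)ᵀ := rfl
    _ = ((tunit a)⁻¹).val := rfl

lemma aux_group2 {Gp : Type*} [Group Gp] (t Ws B g gs : Gp)
    (e1 : t * Ws * gs = Ws) (e2 : t * B * g = B) :
    (Ws⁻¹ * B) * g = gs * (Ws⁻¹ * B) := by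
  have ht : t = Ws * gs⁻¹ * Ws⁻¹ := by
    apply mul_right_cancel (b := Ws * gs)
    rw [← mul_assoc, e1]
    group
  rw [ht] at e2
  have h1 : gs⁻¹ * (Ws⁻¹ * B * g) = Ws⁻¹ * B := by
    apply mul_left_cancel (a := Ws)
    calc Ws * (gs⁻¹ * (Ws⁻¹ * B * g)) = Ws * gs⁻¹ * Ws⁻¹ * B * g := by group
      _ = B := e2
      _ = Ws * (Ws⁻¹ * B) := by group
  calc Ws⁻¹ * B * g = gs * (gs⁻¹ * (Ws⁻¹ * B * g)) := by group
    _ = gs * (Ws⁻¹ * B) := by rw [h1]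

end Aux2

theorem stmt_12 (F : Type*) [Field F] [Fintype F] (u N : ℕ)
    (hq : Fintype.card F = u ^ 2)
    (G : Subgroup (GL (Fin N) F))
    (W D : Matrix (Fin N) (Fin N) F)
    (hW : IsUnit W) (hD : IsUnit D)
    (hherm : (D.map (fun a => a ^ u))ᵀ = D)
    (hGW : ∀ g ∈ G, ((g : Matrix (Fin N) (Fin N) F))ᵀ * W * (g : Matrix (Fin N) (Fin N) F) = W)
    (hGD : ∀ g ∈ G, (((g : Matrix (Fin N) (Fin N) F)).map (fun a => a ^ u))ᵀ * D *
      (g : Matrix (Fin N) (Fin N) F) = D)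
    (hirr : Submodule.span F {m : Matrix (Fin N) (Fin N) F |
      ∃ g ∈ G, m = (g : Matrix (Fin N) (Fin N) F)} = ⊤) :
    ∃ (x : GL (Fin N) F) (W' : Matrix (Fin N) (Fin N) F),
      IsUnit W' ∧
      (∀ i j, (W' i j) ^ u = W' i j) ∧
      (∀ g ∈ G, ∀ i j,
        (((x * g * x⁻¹ : GL (Fin N) F) : Matrix (Fin N) (Fin N) F) i j) ^ u =
          ((x * g * x⁻¹ : GL (Fin N) F) : Matrix (Fin N) (Fin N) F) i j) ∧
      (∀ g ∈ G,
        ((x * g * x⁻¹ : GL (Fin N) F) : Matrix (Fin N) (Fin N) F)ᵀ * W' *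
          ((x * g * x⁻¹ : GL (Fin N) F) : Matrix (Fin N) (Fin N) F) = W') ∧
      (W'ᵀ = W' ↔ Wᵀ = W) ∧ (W'ᵀ = -W' ↔ Wᵀ = -W) := by
  classical
  rcases isEmpty_or_nonempty (Fin N) with hN | hN
  · exact ⟨1, W, hW, fun i _ => isEmptyElim i, fun g _ i _ => isEmptyElim i,
      fun g _ => Matrix.ext fun i _ => isEmptyElim i, Iff.rfl, Iff.rfl⟩
  obtain ⟨i0⟩ := hN
  -- u ≥ 2
  have hu : 2 ≤ u := by
    have h2 : 2 ≤ u ^ 2 := by rw [← hq]; exact Fintype.one_lt_card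
    by_contra h
    push_neg at h
    interval_cases u <;> simp_all
  -- the Frobenius-type automorphism
  obtain ⟨σ, hσ⟩ := aux_exists_sigma u hq
  have hσσ : ∀ x : F, σ (σ x) = x := by
    intro x
    rw [hσ, hσ, ← pow_mul, ← sq, ← hq, FiniteField.pow_card]
  -- a generator of Fˣ, and the fact that σ is not the identity
  obtain ⟨g0, hg0⟩ := IsCyclic.exists_monoid_generator (α := Fˣ)
  have hordg : orderOf g0 = u ^ 2 - 1 := by
    rw [orderOf_eq_card_of_forall_mem_zpowers (fun x => mem_powers_iff_mem_zpowers.1 (hg0 x)),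
      Nat.card_eq_fintype_card, Fintype.card_units, hq]
  set α : F := (g0 : F) with hαdef
  have hα : σ α ≠ α := by
    intro hfix
    rw [hσ] at hfix
    have h1 : g0 ^ u = g0 := Units.ext (by simpa using hfix)
    have h2 : g0 ^ (u - 1) = 1 := by
      have h3 : g0 ^ (u - 1) * g0 = 1 * g0 := by
        rw [one_mul, ← pow_succ, show u - 1 + 1 = u by omega, h1]
      exact mul_right_cancel h3
    have h4 := orderOf_dvd_of_pow_eq_one h2
    rw [hordg] at h4
    have h5 := Nat.le_of_dvd (by omega) h4
    have h6 : 2 * u ≤ u * u := Nat.mul_le_mul_right u hu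
    have h7 : u ^ 2 = u * u := sq u
    omega
  -- matrix-level σ machinery
  set mU : (Matrix (Fin N) (Fin N) F)ˣ →* (Matrix (Fin N) (Fin N) F)ˣ :=
    Units.map (σ.mapMatrix (m := Fin N)).toMonoidHom with hmUdef
  have hmUval : ∀ a : (Matrix (Fin N) (Fin N) F)ˣ, (mU a).val = a.val.map σ := fun a => rfl
  have hmUmU : ∀ a : (Matrix (Fin N) (Fin N) F)ˣ, mU (mU a) = a := by
    intro a
    apply Units.ext
    show (a.val.map σ).map σ = a.val
    ext i j
    simp [Matrix.map_apply, hσσ]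
  have hmaptunit : ∀ a : (Matrix (Fin N) (Fin N) F)ˣ, mU (tunit a) = tunit (mU a) := by
    intro a
    apply Units.ext
    show ((a.valᵀ).map σ) = (a.val.map σ)ᵀ
    exact Matrix.transpose_map
  -- helper: cancel units on either side; nonzero-ness; smul facts
  have hcancelR : ∀ (P Q : Matrix (Fin N) (Fin N) F) (t : (Matrix (Fin N) (Fin N) F)ˣ),
      P * t.val = Q * t.val → P = Q := by
    intro P Q t h
    calc P = P * (t.val * t.inv) := by rw [t.val_inv, mul_one]
      _ = P * t.val * t.inv := by rw [mul_assoc]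
      _ = Q * t.val * t.inv := by rw [h]
      _ = Q * (t.val * t.inv) := by rw [mul_assoc]
      _ = Q := by rw [t.val_inv, mul_one]
  have hcancelL : ∀ (P Q : Matrix (Fin N) (Fin N) F) (t : (Matrix (Fin N) (Fin N) F)ˣ),
      t.val * P = t.val * Q → P = Q := by
    intro P Q t h
    calc P = t.inv * t.val * P := by rw [t.inv_val, one_mul]
      _ = t.inv * (t.val * P) := by rw [mul_assoc]
      _ = t.inv * (t.val * Q) := by rw [h]
      _ = t.inv * t.val * Q := by rw [mul_assoc]
      _ = Q := by rw [t.inv_val, one_mul]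
  have hunitne : ∀ t : (Matrix (Fin N) (Fin N) F)ˣ, t.val ≠ 0 := by
    intro t h
    have h1 := t.val_inv
    rw [h] at h1
    have h2 := congrFun (congrFun h1 i0) i0
    simp [Matrix.one_apply] at h2
  have hmapsmul : ∀ (a : F) (M : Matrix (Fin N) (Fin N) F), (a • M).map σ = σ a • M.map σ := by
    intro a M
    ext i j
    simp [Matrix.map_apply, _root_.map_mul]
  -- the units for W, D and their σ-images
  set WU : (Matrix (Fin N) (Fin N) F)ˣ := hW.unit with hWUdef
  set DU : (Matrix (Fin N) (Fin N) F)ˣ := hD.unit with hDUdef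
  have hWU : WU.val = W := hW.unit_spec
  have hDU : DU.val = D := hD.unit_spec
  -- key intertwining relation
  set Cu : (Matrix (Fin N) (Fin N) F)ˣ := (mU WU)⁻¹ * DU with hCudef
  have key : ∀ g ∈ G, Cu * g = mU g * Cu := by
    intro g hg
    have e1 : tunit (mU g) * mU WU * mU g = mU WU := by
      apply Units.ext
      show ((g : Matrix (Fin N) (Fin N) F).map σ)ᵀ * ((mU WU).val) * ((g : Matrix (Fin N) (Fin N) F).map σ) = (mU WU).val
      rw [hmUval, hWU]
      have h := congrArg (fun M : Matrix (Fin N) (Fin N) F => M.map σ) (hGW g hg)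
      simp only [Matrix.map_mul] at h
      rw [Matrix.transpose_map] at h
      exact h
    have e2 : tunit (mU g) * DU * g = DU := by
      apply Units.ext
      show ((g : Matrix (Fin N) (Fin N) F).map σ)ᵀ * DU.val * (g : Matrix (Fin N) (Fin N) F) = DU.val
      rw [hDU]
      have h := hGD g hg
      have hmap : (g : Matrix (Fin N) (Fin N) F).map (fun a => a ^ u)
          = (g : Matrix (Fin N) (Fin N) F).map σ := by
        ext i j; simp [Matrix.map_apply, hσ]
      rw [hmap] at h
      exact h
    exact aux_group2 _ _ _ _ _ e1 e2
  -- the scalar λ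
  set Su : (Matrix (Fin N) (Fin N) F)ˣ := mU Cu * Cu with hSudef
  have hSucomm : ∀ g ∈ G, Su * g = g * Su := by
    intro g hg
    have h1 : Su * g = mU Cu * (mU g * Cu) := by rw [hSudef, mul_assoc, key g hg]
    rw [h1, ← mul_assoc, ← _root_.map_mul mU, key g hg, _root_.map_mul mU, hmUmU, mul_assoc, ← hSudef]
  obtain ⟨lam, hlam⟩ := aux_scalar G hirr Su.val (by
    intro g hg
    have := congrArg Units.val (hSucomm g hg)
    simpa [Units.val_mul] using this)
  have hlam0 : lam ≠ 0 := by
    intro h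
    exact hunitne Su (by rw [hlam, h, zero_smul])
  -- Cu * mU Cu = lam • 1 as well
  have hCumUCu : (Cu * mU Cu).val = lam • (1 : Matrix (Fin N) (Fin N) F) := by
    have h1 : Cu * mU Cu = Cu * Su * Cu⁻¹ := by rw [hSudef]; group
    rw [h1]
    calc (Cu * Su * Cu⁻¹).val = Cu.val * Su.val * (Cu⁻¹).val := by simp [Units.val_mul]
      _ = Cu.val * (lam • 1) * (Cu⁻¹).val := by rw [hlam]
      _ = lam • (Cu.val * (Cu⁻¹).val) := by
          simp [Matrix.mul_smul, Matrix.smul_mul]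
      _ = lam • 1 := by rw [Units.mul_inv]
  have hlamfix : σ lam = lam := by
    have h1 : (mU Su).val = σ lam • (1 : Matrix (Fin N) (Fin N) F) := by
      rw [hmUval, hlam, hmapsmul]
      congr 1
      ext i j
      by_cases h : i = j <;> simp [Matrix.one_apply, h]
    have h2 : mU Su = Cu * mU Cu := by rw [hSudef, _root_.map_mul mU, hmUmU]
    rw [h2, hCumUCu] at h1
    have h3 := congrFun (congrFun h1 i0) i0
    simpa [Matrix.one_apply] using h3.symm
  have hlamu : lam ^ u = lam := by rw [← hσ]; exact hlamfix
  obtain ⟨mu, hmu0, hmuval⟩ := aux_norm_surj u hu hq lam hlam0 hlamu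
  have hmuσ : σ mu * mu = lam := by rw [hσ]; exact hmuval
  -- the normalized cocycle C
  set C : Matrix (Fin N) (Fin N) F := mu⁻¹ • Cu.val with hCdef
  have hCint : ∀ g ∈ G, C * (g : Matrix (Fin N) (Fin N) F)
      = ((g : Matrix (Fin N) (Fin N) F).map σ) * C := by
    intro g hg
    have h1 := congrArg Units.val (key g hg)
    simp only [Units.val_mul, hmUval] at h1
    rw [hCdef, smul_mul_assoc, h1, mul_smul_comm]
  have hC1 : C * C.map σ = 1 := by
    rw [hCdef, hmapsmul, smul_mul_assoc, mul_smul_comm, smul_smul]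
    have h1 : Cu.val * (Cu.val.map σ) = lam • (1 : Matrix (Fin N) (Fin N) F) := by
      have := hCumUCu
      simpa [Units.val_mul, hmUval] using this
    rw [h1, smul_smul, map_inv₀]
    have hσmu0 : σ mu ≠ 0 := by rw [hσ]; exact pow_ne_zero _ hmu0
    have : mu⁻¹ * (σ mu)⁻¹ * lam = 1 := by
      rw [← hmuσ, show mu⁻¹ * (σ mu)⁻¹ * (σ mu * mu) = (σ mu)⁻¹ * σ mu * (mu⁻¹ * mu) from by ring,
        inv_mul_cancel₀ hσmu0, inv_mul_cancel₀ hmu0, one_mul]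
    rw [this, one_smul]
  -- Galois descent: find invertible y with C * yᵠ = y
  obtain ⟨y, hy, hyC⟩ := aux_descent σ hσσ α hα C hC1
  set yu : (Matrix (Fin N) (Fin N) F)ˣ := hy.unit with hyudef
  have hyuval : yu.val = y := hy.unit_spec
  set a : (Matrix (Fin N) (Fin N) F)ˣ := mU yu with hadef
  have hmUa : mU a = yu := by rw [hadef, hmUmU]
  set Cu2 : (Matrix (Fin N) (Fin N) F)ˣ := yu * a⁻¹ with hCu2def
  have hCu2val : Cu2.val = C := by
    apply hcancelR _ _ a
    have h1 : Cu2.val * a.val = yu.val := by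
      have : Cu2 * a = yu := by rw [hCu2def]; group
      calc Cu2.val * a.val = (Cu2 * a).val := by simp [Units.val_mul]
        _ = yu.val := by rw [this]
    rw [h1, hyuval]
    have h2 : a.val = y.map σ := by rw [hadef, hmUval, hyuval]
    rw [h2, hyC]
  have hCu2int : ∀ g ∈ G, Cu2 * g = mU g * Cu2 := by
    intro g hg
    apply Units.ext
    simp only [Units.val_mul, hCu2val, hmUval]
    exact hCint g hg
  -- the conjugating element x = a⁻¹ and σ-fixedness of conjugates
  have hfixU : ∀ g ∈ G, mU (a⁻¹ * g * a) = a⁻¹ * g * a := by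
    intro g hg
    have hmg : mU g = Cu2 * g * Cu2⁻¹ := by rw [hCu2int g hg]; group
    rw [_root_.map_mul mU, _root_.map_mul mU, map_inv mU, hmUa, hmg, hCu2def]
    group
  have hfixmat : ∀ g ∈ G, ((a⁻¹ * g * a).val).map σ = (a⁻¹ * g * a).val := by
    intro g hg
    have := congrArg Units.val (hfixU g hg)
    rw [hmUval] at this
    exact this
  -- the invariant form W1
  set W1U : (Matrix (Fin N) (Fin N) F)ˣ := tunit a * WU * a with hW1Udef
  have hW1val : W1U.val = a.valᵀ * W * a.val := by
    rw [hW1Udef]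
    simp [Units.val_mul, tunit_val, hWU]
  have hWUinv : ∀ g ∈ G, tunit (g : GL (Fin N) F) * WU * g = WU := by
    intro g hg
    apply Units.ext
    simp only [Units.val_mul, tunit_val, hWU]
    exact hGW g hg
  have hinv : ∀ g ∈ G, tunit (a⁻¹ * g * a) * W1U * (a⁻¹ * g * a) = W1U := by
    intro g hg
    have h7 : tunit (a⁻¹ * g * a) = tunit a * tunit (g : GL (Fin N) F) * (tunit a)⁻¹ := by
      rw [tunit_mul, tunit_mul, tunit_inv, mul_assoc]
    calc tunit (a⁻¹ * g * a) * W1U * (a⁻¹ * g * a)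
        = (tunit a * tunit (g : GL (Fin N) F) * (tunit a)⁻¹) * (tunit a * WU * a)
          * (a⁻¹ * g * a) := by rw [h7, hW1Udef]
      _ = tunit a * (tunit (g : GL (Fin N) F) * WU * g) * a := by group
      _ = tunit a * WU * a := by rw [hWUinv g hg]
      _ = W1U := by rw [hW1Udef]
  have hminv : ∀ g ∈ G, tunit (a⁻¹ * g * a) * mU W1U * (a⁻¹ * g * a) = mU W1U := by
    intro g hg
    have h := congrArg mU (hinv g hg)
    rw [_root_.map_mul mU, _root_.map_mul mU, hmaptunit, hfixU g hg] at h
    exact h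
  -- the scalar c with W1ᵠ = c • W1
  set Xm : (Matrix (Fin N) (Fin N) F)ˣ := W1U⁻¹ * mU W1U with hXmdef
  have hXcomm : ∀ g ∈ G, Xm * (a⁻¹ * g * a) = (a⁻¹ * g * a) * Xm := by
    intro g hg
    exact aux_group2 _ _ _ _ _ (hinv g hg) (hminv g hg)
  have hXconj : ∀ g ∈ G, (a * Xm * a⁻¹) * g = g * (a * Xm * a⁻¹) := by
    intro g hg
    calc (a * Xm * a⁻¹) * g = a * (Xm * (a⁻¹ * g * a)) * a⁻¹ := by group
      _ = a * ((a⁻¹ * g * a) * Xm) * a⁻¹ := by rw [hXcomm g hg]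
      _ = g * (a * Xm * a⁻¹) := by group
  obtain ⟨c, hc⟩ := aux_scalar G hirr (a * Xm * a⁻¹).val (by
    intro g hg
    have := congrArg Units.val (hXconj g hg)
    simpa [Units.val_mul] using this)
  have hXmval : Xm.val = c • (1 : Matrix (Fin N) (Fin N) F) := by
    have h11 : Xm = a⁻¹ * (a * Xm * a⁻¹) * a := by group
    calc Xm.val = (a⁻¹ * (a * Xm * a⁻¹) * a).val := by rw [← h11]
      _ = (a⁻¹).val * (a * Xm * a⁻¹).val * a.val := by rw [Units.val_mul, Units.val_mul]
      _ = (a⁻¹).val * (c • 1) * a.val := by rw [hc]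
      _ = c • ((a⁻¹).val * 1 * a.val) := by simp [Matrix.mul_smul, Matrix.smul_mul]
      _ = c • (1 : Matrix (Fin N) (Fin N) F) := by rw [mul_one, Units.inv_mul]
  have hW1σ : (W1U.val).map σ = c • W1U.val := by
    have h1 : mU W1U = W1U * Xm := by rw [hXmdef]; group
    have h2 := congrArg Units.val h1
    simp only [Units.val_mul, hmUval] at h2
    rw [h2, hXmval]
    simp [Matrix.mul_smul]
  have hc0 : c ≠ 0 := by
    intro h
    exact hunitne Xm (by rw [hXmval, h, zero_smul])
  have hW1ne : W1U.val ≠ 0 := hunitne W1U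
  have hccσ : σ c * c = 1 := by
    have h1 : (W1U.val.map σ).map σ = W1U.val := by
      ext i j; simp [Matrix.map_apply, hσσ]
    rw [hW1σ, hmapsmul, hW1σ, smul_smul] at h1
    obtain ⟨i, j, hij⟩ : ∃ i j, W1U.val i j ≠ 0 := by
      by_contra hcon
      push_neg at hcon
      exact hW1ne (Matrix.ext fun i j => hcon i j)
    have h2 := congrFun (congrFun h1 i) j
    simp only [Matrix.smul_apply, smul_eq_mul] at h2
    have h3 : (σ c * c) * W1U.val i j = 1 * W1U.val i j := by rw [one_mul, h2]
    exact mul_right_cancel₀ hij h3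
  -- find e ≠ 0 with σ e * c = e
  obtain ⟨e, he0, heσ⟩ : ∃ e : F, e ≠ 0 ∧ σ e * c = e := by
    by_cases hc1 : 1 + c = 0
    · refine ⟨α - σ α, sub_ne_zero.2 fun h => hα h.symm, ?_⟩
      have hcm1 : c = -1 := by linear_combination hc1
      rw [_root_.map_sub, hσσ, hcm1]
      ring
    · refine ⟨1 + c, hc1, ?_⟩
      rw [_root_.map_add, _root_.map_one, add_mul, one_mul, hccσ]
      ring
  -- helpers for smul cancellation
  have hsmulinj : ∀ A B : Matrix (Fin N) (Fin N) F, e • A = e • B → A = B := by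
    intro A B h
    have := congrArg (fun z => e⁻¹ • z) h
    simpa [smul_smul, inv_mul_cancel₀ he0] using this
  have hcongr : ∀ P Q : Matrix (Fin N) (Fin N) F,
      (a.valᵀ * P * a.val = a.valᵀ * Q * a.val ↔ P = Q) := by
    intro P Q
    constructor
    · intro h
      have h1 := hcancelR _ _ a h
      exact hcancelL _ _ (tunit a) h1
    · intro h; rw [h]
  -- assemble the answer
  refine ⟨a⁻¹, e • W1U.val, ?_, ?_, ?_, ?_, ?_, ?_⟩
  · have h1 : IsUnit ((Units.mk0 e he0 : Fˣ) • W1U.val) := W1U.isUnit.smul _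
    simpa [Units.smul_def] using h1
  · intro i j
    have hW'σ : (e • W1U.val).map σ = e • W1U.val := by
      rw [hmapsmul, hW1σ, smul_smul, heσ]
    have h := congrFun (congrFun hW'σ i) j
    rw [← hσ]
    simpa [Matrix.map_apply] using h
  · intro g hg i j
    have h := congrFun (congrFun (hfixmat g hg) i) j
    rw [← hσ]
    simp only [inv_inv]
    simpa [Matrix.map_apply] using h
  · intro g hg
    have h1 := congrArg Units.val (hinv g hg)
    simp only [Units.val_mul, tunit_val] at h1
    simp only [inv_inv]
    calc ((a⁻¹ * g * a).val)ᵀ * (e • W1U.val) * (a⁻¹ * g * a).val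
        = e • (((a⁻¹ * g * a).val)ᵀ * W1U.val * (a⁻¹ * g * a).val) := by
          simp [Matrix.mul_smul, Matrix.smul_mul]
      _ = e • W1U.val := by
          rw [show ((a⁻¹ * g * a).val)ᵀ * W1U.val * (a⁻¹ * g * a).val = W1U.val from h1]
  · constructor
    · intro h
      have h1 : W1U.valᵀ = W1U.val := by
        apply hsmulinj
        rw [← Matrix.transpose_smul]
        exact h
      rw [hW1val] at h1
      have h2 : (a.valᵀ * W * a.val)ᵀ = a.valᵀ * Wᵀ * a.val := by
        rw [Matrix.transpose_mul, Matrix.transpose_mul, Matrix.transpose_transpose]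
        rw [Matrix.mul_assoc]
      rw [h2] at h1
      exact (hcongr Wᵀ W).1 h1
    · intro h
      have h2 : (a.valᵀ * W * a.val)ᵀ = a.valᵀ * Wᵀ * a.val := by
        rw [Matrix.transpose_mul, Matrix.transpose_mul, Matrix.transpose_transpose,
          Matrix.mul_assoc]
      have h1 : W1U.valᵀ = W1U.val := by rw [hW1val, h2, h]
      rw [Matrix.transpose_smul, h1]
  · constructor
    · intro h
      have h1 : W1U.valᵀ = -W1U.val := by
        apply hsmulinj
        rw [← Matrix.transpose_smul, smul_neg]
        exact h
      rw [hW1val] at h1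
      have h2 : (a.valᵀ * W * a.val)ᵀ = a.valᵀ * Wᵀ * a.val := by
        rw [Matrix.transpose_mul, Matrix.transpose_mul, Matrix.transpose_transpose]
        rw [Matrix.mul_assoc]
      have h3 : a.valᵀ * (-W) * a.val = -(a.valᵀ * W * a.val) := by
        rw [Matrix.mul_neg, Matrix.neg_mul]
      rw [h2, ← h3] at h1
      have := (hcongr Wᵀ (-W)).1 h1
      exact this
    · intro h
      have h2 : (a.valᵀ * W * a.val)ᵀ = a.valᵀ * Wᵀ * a.val := by
        rw [Matrix.transpose_mul, Matrix.transpose_mul, Matrix.transpose_transpose,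
          Matrix.mul_assoc]
      have h3 : a.valᵀ * (-W) * a.val = -(a.valᵀ * W * a.val) := by
        rw [Matrix.mul_neg, Matrix.neg_mul]
      have h1 : W1U.valᵀ = -W1U.val := by rw [hW1val, h2, h, h3]
      rw [Matrix.transpose_smul, h1, smul_neg]
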